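/- Let A be a finite subset of ω and let ι_A : A → ω be the inclusion. For every M-set W, the evaluation map Hom_M(I_A, W) → {x ∈ W : supp(x) ⊆ A}, φ ↦ φ(ι_A), is a bijection; i.e. the M-set I_A of injections A → ω (with M acting by postcomposition) represents the functor of elements supported on A. -/

import Mathlib

/-- The injection monoid `M`: injective self-maps of `ℕ` under composition. -/
def M : Submonoid (Function.End ℕ) where
  carrier := {f | Function.Injective f}
  mul_mem' := fun hf hg => hf.comp hg
  one_mem' := fun _ _ h => h

/-- An element `x` of an `M`-set is supported on `A ⊆ ℕ` if every `f ∈ M`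
fixing `A` elementwise satisfies `f • x = x`. -/
def SuppOn {W : Type*} [MulAction M W] (x : W) (A : Set ℕ) : Prop :=
  ∀ f : M, (∀ a ∈ A, f.1 a = a) → f • x = x

/-- An element is finitely supported if it is supported on some finite set. -/
def FinSupp {W : Type*} [MulAction M W] (x : W) : Prop :=
  ∃ A : Finset ℕ, SuppOn x ↑A

open Classical in
/-- The support: intersection of all finite supporting sets, or `Set.univ`
if the element is not finitely supported. -/
noncomputable def supp {W : Type*} [MulAction M W] (x : W) : Set ℕ :=
  if FinSupp x then ⋂₀ {A : Set ℕ | A.Finite ∧ SuppOn x A} else Set.univ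

/-- The `M`-set `I_A` of injections `A → ℕ`, with `M` acting by postcomposition. -/
def IA (A : Finset ℕ) : Type := {α : A → ℕ // Function.Injective α}

instance (A : Finset ℕ) : MulAction M (IA A) where
  smul f α := ⟨f.1 ∘ α.1, f.2.comp α.2⟩
  one_smul α := rfl
  mul_smul f g α := rfl

/-- The inclusion `ι_A : A → ℕ`, as an element of `I_A`. -/
def iotaA (A : Finset ℕ) : IA A := ⟨fun a => (a : ℕ), fun _ _ h => Subtype.ext h⟩

/-- Any injection `A → ℕ` with `A` finite extends to a permutation of `ℕ`. -/
lemma exists_perm_ext (A : Finset ℕ) (α : IA A) :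
    ∃ π : Equiv.Perm ℕ, ∀ a : A, π (a : ℕ) = α.1 a := by
  classical
  set p : ℕ → Prop := fun n => n ∈ A with hp
  set q : ℕ → Prop := fun n => n ∈ Set.range α.1 with hq
  have h1 : Set.Infinite {n | ¬ p n} := by
    have : {n | ¬ p n} = (↑A : Set ℕ)ᶜ := rfl
    rw [this]
    exact (A.finite_toSet).infinite_compl
  have h2 : Set.Infinite {n | ¬ q n} := by
    have : {n | ¬ q n} = (Set.range α.1)ᶜ := rfl
    rw [this]
    exact (Set.finite_range α.1).infinite_compl
  have i1 : Infinite {n // ¬ p n} := h1.to_subtype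
  have i2 : Infinite {n // ¬ q n} := h2.to_subtype
  obtain ⟨d1⟩ := nonempty_denumerable {n // ¬ p n}
  obtain ⟨d2⟩ := nonempty_denumerable {n // ¬ q n}
  have e₂ : {n // ¬ p n} ≃ {n // ¬ q n} :=
    (@Denumerable.eqv _ d1).trans (@Denumerable.eqv _ d2).symm
  refine ⟨Equiv.subtypeCongr (Equiv.ofInjective α.1 α.2) e₂, fun a => ?_⟩
  have : (Equiv.subtypeCongr (Equiv.ofInjective α.1 α.2) e₂) (a : ℕ)
      = (Equiv.ofInjective α.1 α.2 ⟨(a : ℕ), a.2⟩ : {n // q n}) := by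
    simp [Equiv.subtypeCongr, Equiv.sumCompl_symm_apply_of_pos (p := p) a.2]
  rw [this]
  rfl

/-- Any element of `I_A` is of the form `g • ι_A` for some `g ∈ M`. -/
lemma exists_smul_iota (A : Finset ℕ) (α : IA A) :
    ∃ g : M, g • iotaA A = α := by
  obtain ⟨π, hπ⟩ := exists_perm_ext A α
  refine ⟨⟨(π : ℕ → ℕ), π.injective⟩, Subtype.ext (funext fun a => hπ a)⟩

/-- Key lemma: if `x` is supported on `A` and `g, g'` agree on `A`,
then `g • x = g' • x`. -/
lemma smul_eq_of_agree {W : Type*} [MulAction M W] {x : W} {A : Finset ℕ}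
    (hx : SuppOn x ↑A) (g g' : M) (h : ∀ a ∈ A, g.1 a = g'.1 a) :
    g • x = g' • x := by
  obtain ⟨π, hπ⟩ := exists_perm_ext A ⟨g.1 ∘ (fun a : A => (a : ℕ)),
    g.2.comp (fun _ _ hh => Subtype.ext hh)⟩
  set P : M := ⟨(π : ℕ → ℕ), π.injective⟩ with hP
  set Pinv : M := ⟨(π.symm : ℕ → ℕ), π.symm.injective⟩ with hPinv
  have key : ∀ k : M, (∀ a ∈ A, k.1 a = g.1 a) → k • x = P • x := by
    intro k hk
    have hfix : (Pinv * k) • x = x := by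
      refine hx (Pinv * k) fun a ha => ?_
      show π.symm (k.1 a) = a
      have hπ' : π a = g.1 a := hπ ⟨a, ha⟩
      rw [hk a ha, ← hπ']
      exact π.symm_apply_apply a
    have hPk : P * (Pinv * k) = k := by
      refine Subtype.ext (funext fun n => ?_)
      exact π.apply_symm_apply (k.1 n)
    calc k • x = (P * (Pinv * k)) • x := by rw [hPk]
      _ = P • ((Pinv * k) • x) := mul_smul _ _ _
      _ = P • x := by rw [hfix]
  rw [key g (fun a _ => rfl), key g' (fun a ha => (h a ha).symm)]

/-- `I_A` represents the functor of elements supported on `A`: for every `M`-set `W`,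
evaluation at `ι_A` is injective on equivariant maps `I_A → W`, with image exactly
the elements supported on `A`. -/
theorem IA_represents_suppOn (A : Finset ℕ) {W : Type*} [MulAction M W] :
    Function.Injective
      (fun φ : {φ : IA A → W // ∀ (f : M) (α : IA A), φ (f • α) = f • φ α} =>
        φ.1 (iotaA A)) ∧
    Set.range
      (fun φ : {φ : IA A → W // ∀ (f : M) (α : IA A), φ (f • α) = f • φ α} =>
        φ.1 (iotaA A)) = {x : W | SuppOn x ↑A} := by
  constructor
  · intro φ₁ φ₂ h
    apply Subtype.ext
    funext α
    obtain ⟨g, hg⟩ := exists_smul_iota A α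
    calc φ₁.1 α = φ₁.1 (g • iotaA A) := by rw [hg]
      _ = g • φ₁.1 (iotaA A) := φ₁.2 g _
      _ = g • φ₂.1 (iotaA A) := by
          rw [show φ₁.1 (iotaA A) = φ₂.1 (iotaA A) from h]
      _ = φ₂.1 (g • iotaA A) := (φ₂.2 g _).symm
      _ = φ₂.1 α := by rw [hg]
  · ext x
    simp only [Set.mem_range, Set.mem_setOf_eq]
    constructor
    · rintro ⟨φ, rfl⟩ f hf
      have hι : f • iotaA A = iotaA A :=
        Subtype.ext (funext fun a => hf a a.2)
      rw [← φ.2 f, hι]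
    · intro hx
      have hc : ∀ (α : IA A) (a : ℕ) (ha : a ∈ A),
          ((exists_smul_iota A α).choose).1 a = α.1 ⟨a, ha⟩ := fun α a ha =>
        congrArg (fun β : IA A => β.1 ⟨a, ha⟩) (exists_smul_iota A α).choose_spec
      refine ⟨⟨fun α => (exists_smul_iota A α).choose • x, fun f α => ?_⟩, ?_⟩
      · show (exists_smul_iota A (f • α)).choose • x
            = f • ((exists_smul_iota A α).choose • x)
        rw [← mul_smul]
        apply smul_eq_of_agree hx
        intro a ha
        have h1 : ((exists_smul_iota A (f • α)).choose).1 a = f.1 (α.1 ⟨a, ha⟩) :=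
          hc (f • α) a ha
        have h2 : (f * (exists_smul_iota A α).choose).1 a = f.1 (α.1 ⟨a, ha⟩) := by
          show f.1 (((exists_smul_iota A α).choose).1 a) = f.1 (α.1 ⟨a, ha⟩)
          rw [hc α a ha]
        rw [h1, h2]
      · show (exists_smul_iota A (iotaA A)).choose • x = x
        have : (exists_smul_iota A (iotaA A)).choose • x = (1 : M) • x := by
          apply smul_eq_of_agree hx
          intro a ha
          exact hc (iotaA A) a ha
        rw [this, one_smul]
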